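/- (Bizley's second identity) For all natural numbers a, b, n, p, we have ∑_{k=0}^{n} C(a,k)·C(b, n−k)·C(p+k, a+b) = C(p, a+b−n)·C(p−b+n, n). -/

import Mathlib

/-- Binomial coefficient for integers: `C x y` is the usual binomial coefficient
when `0 ≤ y ≤ x`, and `0` otherwise. -/
def C (x y : ℤ) : ℤ := if 0 ≤ y ∧ y ≤ x then (x.toNat.choose y.toNat : ℤ) else 0

lemma C_natCast (x y : ℕ) : C x y = (x.choose y : ℤ) := by
  unfold C
  rcases le_or_gt (y : ℤ) (x : ℤ) with h | h
  · rw [if_pos ⟨Int.natCast_nonneg y, h⟩]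
    simp
  · rw [if_neg (by omega), Nat.choose_eq_zero_of_lt (by exact_mod_cast h), Nat.cast_zero]

lemma C_neg {x y : ℤ} (h : y < 0) : C x y = 0 := by
  rw [C, if_neg]
  exact fun h' => absurd h'.1 (not_le.mpr h)

lemma C_lt {x y : ℤ} (h : x < y) : C x y = 0 := by
  rw [C, if_neg]
  exact fun h' => absurd h'.2 (not_le.mpr h)

lemma C_subset (A K J : ℤ) : C A K * C K J = C A J * C (A - J) (K - J) := by
  rcases lt_or_ge J 0 with hJ | hJ
  · rw [C_neg hJ, C_neg hJ]; ring
  rcases lt_or_ge K J with hKJ | hKJ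
  · rw [C_lt hKJ, C_neg (show K - J < 0 by omega)]; ring
  rcases lt_or_ge A K with hAK | hAK
  · rw [C_lt hAK, C_lt (show A - J < K - J by omega)]; ring
  · have hK0 : (0:ℤ) ≤ K := le_trans hJ hKJ
    have hA0 : (0:ℤ) ≤ A := le_trans hK0 hAK
    lift J to ℕ using hJ
    lift K to ℕ using hK0
    lift A to ℕ using hA0
    rw [show (A : ℤ) - J = ((A - J : ℕ) : ℤ) by omega,
        show (K : ℤ) - J = ((K - J : ℕ) : ℤ) by omega,
        C_natCast, C_natCast, C_natCast, C_natCast]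
    exact_mod_cast Nat.choose_mul (by exact_mod_cast hKJ)

lemma C_symm (M R : ℤ) (h0 : 0 ≤ R) (h1 : R ≤ M) : C M R = C M (M - R) := by
  have hM0 : (0:ℤ) ≤ M := le_trans h0 h1
  lift R to ℕ using h0
  lift M to ℕ using hM0
  rw [show (M : ℤ) - R = ((M - R : ℕ) : ℤ) by omega, C_natCast, C_natCast]
  exact_mod_cast (Nat.choose_symm (by exact_mod_cast h1)).symm

lemma C_tri (P M R : ℤ) : C P M * C M R = C P (M - R) * C (P - M + R) R := by
  rcases lt_or_ge R 0 with h | h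
  · rw [C_neg h, C_neg h]; ring
  rcases lt_or_ge M R with h2 | h2
  · rw [C_lt h2, C_neg (show M - R < 0 by omega)]; ring
  rcases lt_or_ge P M with h3 | h3
  · rw [C_lt h3, C_lt (show P - M + R < R by omega)]; ring
  · rw [C_symm M R h h2, C_subset P M (M - R),
        show P - (M - R) = P - M + R by ring, show M - (M - R) = R by ring]

lemma C_vand (x y m : ℕ) :
    C ((x : ℤ) + y) (m : ℤ)
      = ∑ j ∈ Finset.range (m + 1), C (x : ℤ) (j : ℤ) * C (y : ℤ) ((m : ℤ) - j) := by
  have h := Nat.add_choose_eq x y m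
  rw [Finset.Nat.sum_antidiagonal_eq_sum_range_succ_mk] at h
  rw [show ((x : ℤ) + y) = ((x + y : ℕ) : ℤ) by push_cast; ring, C_natCast, h]
  push_cast
  apply Finset.sum_congr rfl
  intro j hj
  have hj' : j ≤ m := by have := Finset.mem_range.mp hj; omega
  rw [C_natCast, show (m : ℤ) - j = ((m - j : ℕ) : ℤ) by omega, C_natCast]

lemma C_inner_sum (a b n j : ℕ) :
    C (a : ℤ) (j : ℤ) *
        ∑ k ∈ Finset.range (n + 1), C ((a : ℤ) - j) ((k : ℤ) - j) * C (b : ℤ) ((n : ℤ) - k)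
      = C (a : ℤ) (j : ℤ) * C ((a : ℤ) + b - j) ((n : ℤ) - j) := by
  rcases lt_or_ge (a : ℤ) (j : ℤ) with haj | haj
  · rw [C_lt haj]; ring
  rcases lt_or_ge n j with hnj | hnj
  · have hsum : ∑ k ∈ Finset.range (n + 1),
        C ((a : ℤ) - j) ((k : ℤ) - j) * C (b : ℤ) ((n : ℤ) - k) = 0 := by
      apply Finset.sum_eq_zero
      intro k hk
      have hk' : k ≤ n := by have := Finset.mem_range.mp hk; omega
      rw [C_neg (show (k : ℤ) - j < 0 by omega)]; ring
    rw [hsum, C_neg (show (n : ℤ) - j < 0 by omega), mul_zero]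
  · have key : ∑ k ∈ Finset.range (n + 1),
        C ((a : ℤ) - j) ((k : ℤ) - j) * C (b : ℤ) ((n : ℤ) - k)
        = C ((a : ℤ) + b - j) ((n : ℤ) - j) := by
      rw [Finset.range_eq_Ico,
        ← Finset.sum_Ico_consecutive _ (Nat.zero_le j) (by omega : j ≤ n + 1)]
      have h1 : ∑ k ∈ Finset.Ico 0 j,
          C ((a : ℤ) - j) ((k : ℤ) - j) * C (b : ℤ) ((n : ℤ) - k) = 0 := by
        apply Finset.sum_eq_zero
        intro k hk
        have hk' : k < j := (Finset.mem_Ico.mp hk).2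
        rw [C_neg (show (k : ℤ) - j < 0 by omega)]; ring
      rw [h1, zero_add, Finset.sum_Ico_eq_sum_range,
        show n + 1 - j = (n - j) + 1 by omega,
        show (a : ℤ) + b - j = ((a - j : ℕ) : ℤ) + b by omega,
        show (n : ℤ) - j = ((n - j : ℕ) : ℤ) by omega, C_vand (a - j) b (n - j)]
      apply Finset.sum_congr rfl
      intro i hi
      rw [show ((j + i : ℕ) : ℤ) - j = (i : ℤ) by push_cast; ring,
        show ((a - j : ℕ) : ℤ) = (a : ℤ) - j by omega,
        show ((n - j : ℕ) : ℤ) - i = (n : ℤ) - ((j + i : ℕ) : ℤ) by push_cast; omega]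
    rw [key]

lemma final_sum (a b n p : ℕ) (h : a + b ≤ p + n) :
    ∑ j ∈ Finset.range (a + b + 1), C (a : ℤ) j * C ((p : ℤ) - a - b + n) ((n : ℤ) - j)
      = C ((p : ℤ) - b + n) (n : ℤ) := by
  have hq' : ((p : ℤ) - a - b + n) = ((p + n - (a + b) : ℕ) : ℤ) := by omega
  have hpb : ((p : ℤ) - b + n) = ((a : ℤ) + ((p + n - (a + b) : ℕ) : ℤ)) := by omega
  set q := p + n - (a + b) with hqdef
  rw [hq', hpb]
  have e1 : ∑ j ∈ Finset.range (a + b + 1), C (a : ℤ) j * C (q : ℤ) ((n : ℤ) - j)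
      = ∑ j ∈ Finset.range (a + b + n + 2), C (a : ℤ) j * C (q : ℤ) ((n : ℤ) - j) := by
    apply Finset.sum_subset (Finset.range_subset_range.mpr (by omega))
    intro j hj hj2
    have hja : a < j := by
      simp only [Finset.mem_range] at hj hj2; omega
    rw [C_lt (show (a : ℤ) < j by exact_mod_cast hja)]; ring
  have e2 : ∑ j ∈ Finset.range (n + 1), C (a : ℤ) j * C (q : ℤ) ((n : ℤ) - j)
      = ∑ j ∈ Finset.range (a + b + n + 2), C (a : ℤ) j * C (q : ℤ) ((n : ℤ) - j) := by
    apply Finset.sum_subset (Finset.range_subset_range.mpr (by omega))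
    intro j hj hj2
    have hjn : n < j := by
      simp only [Finset.mem_range] at hj hj2; omega
    rw [C_neg (show (n : ℤ) - j < 0 by omega)]; ring
  rw [e1, C_vand a q n, e2]

theorem stmt_19 (a b n p : ℕ) :
    ∑ k ∈ Finset.range (n + 1), C a k * C b ((n : ℤ) - k) * C ((p : ℤ) + k) ((a : ℤ) + b) = C p ((a : ℤ) + b - n) * C ((p : ℤ) - b + n) n := by
  have step1 : ∀ k : ℕ,
      C (a : ℤ) k * C (b : ℤ) ((n : ℤ) - k) * C ((p : ℤ) + k) ((a : ℤ) + b)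
      = ∑ j ∈ Finset.range (a + b + 1),
          C (p : ℤ) ((a : ℤ) + b - j) * (C (a : ℤ) k * C (k : ℤ) j * C (b : ℤ) ((n : ℤ) - k)) := by
    intro k
    rw [show ((p : ℤ) + k) = ((k : ℤ) + p) by ring,
        show ((a : ℤ) + b) = ((a + b : ℕ) : ℤ) by push_cast; ring, C_vand k p (a + b),
        Finset.mul_sum]
    apply Finset.sum_congr rfl
    intro j hj
    rw [show ((a + b : ℕ) : ℤ) - j = (a : ℤ) + b - j by push_cast; ring]
    ring
  calc ∑ k ∈ Finset.range (n + 1), C (a : ℤ) k * C (b : ℤ) ((n : ℤ) - k) * C ((p : ℤ) + k) ((a : ℤ) + b)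
      = ∑ k ∈ Finset.range (n + 1), ∑ j ∈ Finset.range (a + b + 1),
          C (p : ℤ) ((a : ℤ) + b - j) * (C (a : ℤ) k * C (k : ℤ) j * C (b : ℤ) ((n : ℤ) - k)) :=
        Finset.sum_congr rfl (fun k _ => step1 k)
    _ = ∑ j ∈ Finset.range (a + b + 1), ∑ k ∈ Finset.range (n + 1),
          C (p : ℤ) ((a : ℤ) + b - j) * (C (a : ℤ) k * C (k : ℤ) j * C (b : ℤ) ((n : ℤ) - k)) :=
        Finset.sum_comm
    _ = ∑ j ∈ Finset.range (a + b + 1),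
          C (p : ℤ) ((a : ℤ) + b - j) * (C (a : ℤ) j * C ((a : ℤ) + b - j) ((n : ℤ) - j)) := by
        apply Finset.sum_congr rfl
        intro j hj
        have hs : ∑ k ∈ Finset.range (n + 1),
            C (p : ℤ) ((a : ℤ) + b - j) * (C (a : ℤ) k * C (k : ℤ) j * C (b : ℤ) ((n : ℤ) - k))
            = C (p : ℤ) ((a : ℤ) + b - j) * (C (a : ℤ) (j : ℤ) *
              ∑ k ∈ Finset.range (n + 1), C ((a : ℤ) - j) ((k : ℤ) - j) * C (b : ℤ) ((n : ℤ) - k)) := by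
          rw [Finset.mul_sum, Finset.mul_sum]
          apply Finset.sum_congr rfl
          intro k _
          rw [C_subset (a : ℤ) (k : ℤ) (j : ℤ)]
          ring
        rw [hs, C_inner_sum]
    _ = ∑ j ∈ Finset.range (a + b + 1),
          C (p : ℤ) ((a : ℤ) + b - n) * (C (a : ℤ) j * C ((p : ℤ) - a - b + n) ((n : ℤ) - j)) := by
        apply Finset.sum_congr rfl
        intro j _
        have h := C_tri (p : ℤ) ((a : ℤ) + b - j) ((n : ℤ) - j)
        rw [show (a : ℤ) + b - j - ((n : ℤ) - j) = (a : ℤ) + b - n by ring,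
            show (p : ℤ) - ((a : ℤ) + b - j) + ((n : ℤ) - j) = (p : ℤ) - a - b + n by ring] at h
        calc C (p : ℤ) ((a : ℤ) + b - j) * (C (a : ℤ) j * C ((a : ℤ) + b - j) ((n : ℤ) - j))
            = C (a : ℤ) j * (C (p : ℤ) ((a : ℤ) + b - j) * C ((a : ℤ) + b - j) ((n : ℤ) - j)) := by
              ring
          _ = C (a : ℤ) j * (C (p : ℤ) ((a : ℤ) + b - n) * C ((p : ℤ) - a - b + n) ((n : ℤ) - j)) := by
              rw [h]
          _ = _ := by ring
    _ = C (p : ℤ) ((a : ℤ) + b - n) * ∑ j ∈ Finset.range (a + b + 1),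
          C (a : ℤ) j * C ((p : ℤ) - a - b + n) ((n : ℤ) - j) := by rw [Finset.mul_sum]
    _ = C (p : ℤ) ((a : ℤ) + b - n) * C ((p : ℤ) - b + n) (n : ℤ) := by
        rcases le_or_gt (a + b) (p + n) with h | h
        · rw [final_sum a b n p h]
        · rw [C_lt (show (p : ℤ) < (a : ℤ) + b - n by omega), zero_mul, zero_mul]
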